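/- The join irreducibles of the type B_n Tamari lattice are exactly the elements W_{i,t} defined by: for 1 ≤ t ≤ i-1, the vector with t in position i and 0 elsewhere; for i ≤ t < n, the vector with t in position i, ∞ in position n+i-t, and 0 elsewhere; and W_{i,∞}, the vector with ∞ in position i and 0 elsewhere. Moreover every element of the lattice is the join of the join irreducibles below it. -/

import Mathlib

/-- Condition (i) for type `B_n` bracket vectors: for `i < j` (0-based),
if `r_j - (j-i)` is a nonnegative integer then `r_i ≤ r_j - (j-i)`
(equivalently `r_i + (j-i) ≤ r_j`; when `r_j = ∞` this holds trivially,
matching the convention that `∞` minus an integer is `∞`). -/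
def condIB (n : ℕ) (r : Fin n → ℕ∞) : Prop :=
  ∀ i j : Fin n, i < j → (((j : ℕ) - (i : ℕ) : ℕ) : ℕ∞) ≤ r j →
    r i + (((j : ℕ) - (i : ℕ) : ℕ) : ℕ∞) ≤ r j

/-- Condition (ii) for type `B_n` bracket vectors: if `∞ > r_i ≥ i`
(1-based; here `i = k+1` for the 0-based index `k`) then `r_{n+i-r_i} = ∞`. -/
def condIIB (n : ℕ) (r : Fin n → ℕ∞) : Prop :=
  ∀ (k : Fin n) (t : ℕ), r k = (t : ℕ∞) → ∀ _ht : (k : ℕ) + 1 ≤ t,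
    r ⟨n + (k : ℕ) - t, by have := k.isLt; omega⟩ = ⊤

/-- Entries lie in `{0, …, n-1} ∪ {∞}`. -/
def entriesB (n : ℕ) (r : Fin n → ℕ∞) : Prop :=
  ∀ k, r k = ⊤ ∨ r k ≤ ((n - 1 : ℕ) : ℕ∞)

/-- A type `B_n` bracket vector. -/
def isBVec (n : ℕ) (r : Fin n → ℕ∞) : Prop :=
  entriesB n r ∧ condIB n r ∧ condIIB n r

/-- The candidate join irreducibles `W_{i,t}` (0-based index `k`, so `i = k+1`):
`t` in position `k`; additionally `∞` in position `n + i - t - 1` (0-based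
`n + k - t`) when `i ≤ t < n`; `0` elsewhere.  (When `t = ∞` or `t ≤ i - 1`
the extra `∞` entry does not occur.) -/
noncomputable def Wvec (n : ℕ) (k : Fin n) (t : ℕ∞) : Fin n → ℕ∞ := fun j =>
  if j = k then t
  else if t ≠ ⊤ ∧ (k : ℕ) + 1 ≤ t.toNat ∧ (j : ℕ) = n + (k : ℕ) - t.toNat then ⊤
  else 0

/-- `r` is join irreducible in the type `B_n` Tamari lattice: it is not the
bottom element (the zero vector) and is not the join of two strictly smaller
elements. -/
def joinIrredB (n : ℕ) (r : Fin n → ℕ∞) : Prop :=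
  isBVec n r ∧ r ≠ (fun _ => 0) ∧
    ∀ a b : Fin n → ℕ∞, isBVec n a → isBVec n b → a < r → b < r →
      ∃ h : Fin n → ℕ∞, isBVec n h ∧ a ≤ h ∧ b ≤ h ∧ ¬r ≤ h

/-- The join irreducibles of the type `B_n` Tamari lattice are exactly the
`W_{i,t}` with `1 ≤ t ≤ i - 1`, or `i ≤ t ≤ n - 1`, or `t = ∞`; moreover every
element of the lattice is the join of the join irreducibles below it. -/
/- ============ auxiliary lemmas ============ -/

lemma wvec_self (n : ℕ) (k : Fin n) (t : ℕ∞) : Wvec n k t k = t := if_pos rfl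

lemma wvec_top (n : ℕ) (k : Fin n) (t : ℕ∞) (j : Fin n) (hj : j ≠ k)
    (hP : t ≠ ⊤ ∧ (k : ℕ) + 1 ≤ t.toNat ∧ (j : ℕ) = n + (k : ℕ) - t.toNat) :
    Wvec n k t j = ⊤ := by
  unfold Wvec; rw [if_neg hj, if_pos hP]

lemma wvec_zero (n : ℕ) (k : Fin n) (t : ℕ∞) (j : Fin n) (hj : j ≠ k)
    (hP : ¬(t ≠ ⊤ ∧ (k : ℕ) + 1 ≤ t.toNat ∧ (j : ℕ) = n + (k : ℕ) - t.toNat)) :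
    Wvec n k t j = 0 := by
  unfold Wvec; rw [if_neg hj, if_neg hP]

/-- Vectors with value `s` at `k`, `⊤` on `P ⊆ (k, n)`, `0` elsewhere, with the
companion of `s` in `P`, are bracket vectors. -/
lemma simple_isBVec (n : ℕ) (k : Fin n) (s : ℕ∞) (P : Fin n → Prop)
    (v : Fin n → ℕ∞)
    (hvk : v k = s)
    (hvP : ∀ j, j ≠ k → P j → v j = ⊤)
    (hv0 : ∀ j, j ≠ k → ¬ P j → v j = 0)
    (hs : s = ⊤ ∨ s ≤ ((n-1:ℕ):ℕ∞))
    (hPk : ∀ j, P j → (k:ℕ) < (j:ℕ))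
    (hcomp : ∀ t' : ℕ, s = (t' : ℕ∞) → (k:ℕ)+1 ≤ t' →
      ∀ j : Fin n, (j:ℕ) = n + (k:ℕ) - t' → P j) :
    isBVec n v := by
  refine ⟨?_, ?_, ?_⟩
  · intro j
    by_cases hj : j = k
    · subst hj; rw [hvk]; exact hs
    · by_cases hP : P j
      · left; exact hvP j hj hP
      · right; rw [hv0 j hj hP]; exact zero_le
  · intro i j hij hle
    have hij' : (i:ℕ) < (j:ℕ) := hij
    by_cases hj : j = k
    · have hjk : (j:ℕ) = (k:ℕ) := by rw [hj]
      have hik : i ≠ k := by rw [← hj]; exact ne_of_lt hij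
      have hPi : ¬ P i := fun hp => absurd (hPk i hp) (by omega)
      rw [hv0 i hik hPi, zero_add]; exact hle
    · by_cases hPj : P j
      · rw [hvP j hj hPj]; exact le_top
      · rw [hv0 j hj hPj] at hle
        have : ((j:ℕ) - (i:ℕ)) = 0 := by exact_mod_cast le_antisymm hle zero_le
        omega
  · intro k' t' hval ht'
    by_cases hk : k' = k
    · subst hk
      rw [hvk] at hval
      have htn : t' ≤ n - 1 := by
        rcases hs with h | h
        · rw [h] at hval; exact absurd hval.symm (by simp)
        · rw [hval] at h; exact_mod_cast h
      have hkn := k'.isLt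
      have hPc : P ⟨n + (k':ℕ) - t', by omega⟩ := hcomp t' hval ht' _ rfl
      have hck : (⟨n + (k':ℕ) - t', by omega⟩ : Fin n) ≠ k' := by
        intro h
        have := congrArg Fin.val h
        simp only at this
        omega
      exact hvP _ hck hPc
    · by_cases hPk' : P k'
      · rw [hvP k' hk hPk'] at hval; exact absurd hval.symm (by simp)
      · rw [hv0 k' hk hPk'] at hval
        have : t' = 0 := by exact_mod_cast hval.symm
        omega

lemma wvec_isBVec (n : ℕ) (k : Fin n) (t : ℕ∞)
    (ht : t = ⊤ ∨ t ≤ ((n-1:ℕ):ℕ∞)) : isBVec n (Wvec n k t) := by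
  refine simple_isBVec n k t
    (fun j => t ≠ ⊤ ∧ (k : ℕ) + 1 ≤ t.toNat ∧ (j : ℕ) = n + (k : ℕ) - t.toNat)
    _ (wvec_self n k t) (wvec_top n k t) (wvec_zero n k t) ht ?_ ?_
  · rintro j ⟨hne, hge, hval⟩
    have hkn := k.isLt
    have htn : t.toNat ≤ n - 1 := by
      rcases ht with h | h
      · exact absurd h hne
      · rw [← ENat.coe_toNat hne] at h
        exact_mod_cast h
    omega
  · intro t' hval ht' j hj
    have hne : t ≠ ⊤ := by rw [hval]; simp
    have : t.toNat = t' := by rw [hval]; simp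
    exact ⟨hne, by omega, by omega⟩

lemma wvec_le (n : ℕ) (r : Fin n → ℕ∞) (hr : isBVec n r) (k : Fin n) :
    Wvec n k (r k) ≤ r := by
  intro j
  by_cases hj : j = k
  · subst hj; rw [wvec_self]
  · by_cases hP : r k ≠ ⊤ ∧ (k : ℕ) + 1 ≤ (r k).toNat ∧ (j : ℕ) = n + (k : ℕ) - (r k).toNat
    · rw [wvec_top n k (r k) j hj hP]
      obtain ⟨hne, hge, hval⟩ := hP
      have h2 := hr.2.2 k ((r k).toNat) (ENat.coe_toNat hne).symm hge
      have hjc : j = (⟨n + (k:ℕ) - (r k).toNat, by have := k.isLt; omega⟩ : Fin n) :=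
        Fin.ext hval
      rw [hjc, h2]
    · rw [wvec_zero n k (r k) j hj hP]; exact zero_le

lemma lt_wvec_k (n : ℕ) (k : Fin n) (t : ℕ∞) (a : Fin n → ℕ∞)
    (ha : isBVec n a) (haW : a < Wvec n k t) : a k < t := by
  have hle : a ≤ Wvec n k t := le_of_lt haW
  have hlek : a k ≤ t := by have := hle k; rwa [wvec_self] at this
  refine lt_of_le_of_ne hlek ?_
  intro heq
  apply ne_of_lt haW
  funext j
  by_cases hj : j = k
  · subst hj; rw [wvec_self]; exact heq
  · by_cases hP : t ≠ ⊤ ∧ (k : ℕ) + 1 ≤ t.toNat ∧ (j : ℕ) = n + (k : ℕ) - t.toNat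
    · rw [wvec_top n k t j hj hP]
      obtain ⟨hne, hge, hval⟩ := hP
      have hak : a k = ((t.toNat : ℕ) : ℕ∞) := by rw [ENat.coe_toNat hne]; exact heq
      have h2 := ha.2.2 k t.toNat hak hge
      have hjc : j = (⟨n + (k:ℕ) - t.toNat, by have := k.isLt; omega⟩ : Fin n) :=
        Fin.ext hval
      rw [hjc, h2]
    · rw [wvec_zero n k t j hj hP]
      exact le_antisymm (by have := hle j; rwa [wvec_zero n k t j hj hP] at this) zero_le

lemma wvec_joinIrred (n : ℕ) (k : Fin n) (t : ℕ∞) (ht1 : 1 ≤ t)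
    (ht2 : t = ⊤ ∨ t ≤ ((n-1:ℕ):ℕ∞)) : joinIrredB n (Wvec n k t) := by
  classical
  refine ⟨wvec_isBVec n k t ht2, ?_, ?_⟩
  · intro h
    have := congrFun h k
    rw [wvec_self] at this
    rw [this] at ht1
    simp at ht1
  · intro a b ha hb haW hbW
    have hak : a k < t := lt_wvec_k n k t a ha haW
    have hbk : b k < t := lt_wvec_k n k t b hb hbW
    set s : ℕ∞ := a k ⊔ b k with hs_def
    have hst : s < t := sup_lt_iff.mpr ⟨hak, hbk⟩
    have hsne : s ≠ ⊤ := ne_top_of_lt hst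
    have hsle : s ≤ ((n-1:ℕ):ℕ∞) := by
      rcases ht2 with h | h
      · rcases ha.1 k with h1 | h1
        · exact absurd h1 (ne_top_of_lt hak)
        · rcases hb.1 k with h2 | h2
          · exact absurd h2 (ne_top_of_lt hbk)
          · exact sup_le h1 h2
      · exact le_of_lt (lt_of_lt_of_le hst h)
    set Q : Fin n → Prop := fun j =>
      (t ≠ ⊤ ∧ (k : ℕ) + 1 ≤ t.toNat ∧ (j : ℕ) = n + (k : ℕ) - t.toNat) ∨
      ((k : ℕ) + 1 ≤ s.toNat ∧ (j : ℕ) = n + (k : ℕ) - s.toNat) with hQ_def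
    set h : Fin n → ℕ∞ := fun j => if j = k then s else if Q j then ⊤ else 0 with hh_def
    have hkn := k.isLt
    have hsn : s.toNat ≤ n - 1 := by
      rw [← ENat.coe_toNat hsne] at hsle; exact_mod_cast hsle
    have hhB : isBVec n h := by
      refine simple_isBVec n k s Q h (if_pos rfl)
        (fun j hj hP => by simp only [hh_def, if_neg hj, if_pos hP])
        (fun j hj hP => by simp only [hh_def, if_neg hj, if_neg hP])
        (Or.inr hsle) ?_ ?_
      · rintro j (⟨hne, hge, hval⟩ | ⟨hge, hval⟩)
        · have htn : t.toNat ≤ n - 1 := by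
            rcases ht2 with h' | h'
            · exact absurd h' hne
            · rw [← ENat.coe_toNat hne] at h'; exact_mod_cast h'
          omega
        · omega
      · intro t' hval ht' j hj
        right
        have : s.toNat = t' := by rw [hval]; simp
        exact ⟨by omega, by omega⟩
    have hah : a ≤ h := by
      intro j
      by_cases hj : j = k
      · subst hj
        simp only [hh_def, if_pos rfl]
        exact le_sup_left
      · by_cases hP : t ≠ ⊤ ∧ (k : ℕ) + 1 ≤ t.toNat ∧ (j : ℕ) = n + (k : ℕ) - t.toNat
        · simp only [hh_def, if_neg hj, if_pos (Or.inl hP : Q j)]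
          exact le_of_le_of_eq le_top (if_pos (Or.inl hP : Q j)).symm
        · have : a j ≤ 0 := by
            have := le_of_lt haW j
            rwa [wvec_zero n k t j hj hP] at this
          exact le_trans this zero_le
    have hbh : b ≤ h := by
      intro j
      by_cases hj : j = k
      · subst hj
        simp only [hh_def, if_pos rfl]
        exact le_sup_right
      · by_cases hP : t ≠ ⊤ ∧ (k : ℕ) + 1 ≤ t.toNat ∧ (j : ℕ) = n + (k : ℕ) - t.toNat
        · simp only [hh_def, if_neg hj, if_pos (Or.inl hP : Q j)]
          exact le_of_le_of_eq le_top (if_pos (Or.inl hP : Q j)).symm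
        · have : b j ≤ 0 := by
            have := le_of_lt hbW j
            rwa [wvec_zero n k t j hj hP] at this
          exact le_trans this zero_le
    refine ⟨h, hhB, hah, hbh, ?_⟩
    intro hWh
    have := hWh k
    rw [wvec_self] at this
    simp only [hh_def, if_pos rfl] at this
    exact absurd this (not_le_of_gt hst)

lemma update_isBVec (n : ℕ) (r : Fin n → ℕ∞) (hr : isBVec n r) (k0 : Fin n)
    (hmin : ∀ k, r k ≠ 0 → k0 ≤ k) : isBVec n (Function.update r k0 0) := by
  refine ⟨?_, ?_, ?_⟩
  · intro j
    by_cases hj : j = k0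
    · subst hj; rw [Function.update_self]; right; exact zero_le
    · rw [Function.update_of_ne hj]; exact hr.1 j
  · intro i j hij hle
    have hij' : (i:ℕ) < (j:ℕ) := hij
    by_cases hj : j = k0
    · subst hj
      rw [Function.update_self] at hle
      have : ((j:ℕ) - (i:ℕ)) = 0 := by exact_mod_cast le_antisymm hle zero_le
      omega
    · rw [Function.update_of_ne hj] at hle ⊢
      have h2 := hr.2.1 i j hij hle
      have h3 : Function.update r k0 0 i ≤ r i := by
        by_cases hi : i = k0
        · subst hi; rw [Function.update_self]; exact zero_le
        · rw [Function.update_of_ne hi]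
      exact le_trans (add_le_add_left h3 _) h2
  · intro k' t' hval ht'
    by_cases hk : k' = k0
    · subst hk
      rw [Function.update_self] at hval
      have : t' = 0 := by exact_mod_cast hval.symm
      omega
    · rw [Function.update_of_ne hk] at hval
      have h2 := hr.2.2 k' t' hval ht'
      have hne0 : r k' ≠ 0 := by rw [hval]; exact_mod_cast (by omega : t' ≠ 0)
      have hle : (k0:ℕ) ≤ (k':ℕ) := hmin k' hne0
      have htn : t' ≤ n - 1 := by
        rcases hr.1 k' with h | h
        · rw [hval] at h; exact absurd h (by simp)
        · rw [hval] at h; exact_mod_cast h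
      have hkn := k'.isLt
      have hck : (⟨n + (k':ℕ) - t', by omega⟩ : Fin n) ≠ k0 := by
        intro h
        have := congrArg Fin.val h
        simp only at this
        omega
      rw [Function.update_of_ne hck]
      exact h2


theorem tamariB_joinIrreducibles (n : ℕ) :
    (∀ r : Fin n → ℕ∞, joinIrredB n r ↔
      ∃ (k : Fin n) (t : ℕ∞),
        ((1 ≤ t ∧ t ≤ ((k : ℕ) : ℕ∞)) ∨
          (((k : ℕ) + 1 : ℕ∞) ≤ t ∧ t ≤ ((n - 1 : ℕ) : ℕ∞)) ∨
          t = ⊤) ∧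
        r = Wvec n k t) ∧
    (∀ r : Fin n → ℕ∞, isBVec n r → ∀ h : Fin n → ℕ∞, isBVec n h →
      (∀ w : Fin n → ℕ∞, joinIrredB n w → w ≤ r → w ≤ h) → r ≤ h) := by
  classical
  have key : ∀ (k : Fin n) (t : ℕ∞),
      ((1 ≤ t ∧ t ≤ ((k : ℕ) : ℕ∞)) ∨
        (((k : ℕ) + 1 : ℕ∞) ≤ t ∧ t ≤ ((n - 1 : ℕ) : ℕ∞)) ∨ t = ⊤) →
      1 ≤ t ∧ (t = ⊤ ∨ t ≤ ((n-1:ℕ):ℕ∞)) := by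
    rintro k t (⟨h1, h2⟩ | ⟨h1, h2⟩ | h1)
    · refine ⟨h1, Or.inr (le_trans h2 ?_)⟩
      have := k.isLt
      exact_mod_cast (by omega : (k:ℕ) ≤ n - 1)
    · exact ⟨le_trans (le_add_self) h1, Or.inr h2⟩
    · exact ⟨h1 ▸ le_top, Or.inl h1⟩
  constructor
  · intro r
    constructor
    · intro hji
      obtain ⟨hrB, hr0, hmain⟩ := hji
      have hS : ∃ k, r k ≠ 0 := by
        by_contra hc
        push_neg at hc
        exact hr0 (funext hc)
      set S : Finset (Fin n) := Finset.univ.filter (fun k => r k ≠ 0) with hS_def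
      have hSne : S.Nonempty := by
        obtain ⟨k, hk⟩ := hS
        exact ⟨k, by simp [hS_def, hk]⟩
      set k0 : Fin n := S.min' hSne with hk0_def
      have hk0S : r k0 ≠ 0 := by
        have := S.min'_mem hSne
        simpa [hS_def] using this
      have hmin : ∀ k, r k ≠ 0 → k0 ≤ k := by
        intro k hk
        exact S.min'_le k (by simp [hS_def, hk])
      have ht1 : 1 ≤ r k0 := ENat.one_le_iff_ne_zero.mpr hk0S
      have hrange : (1 ≤ r k0 ∧ r k0 ≤ ((k0 : ℕ) : ℕ∞)) ∨
          (((k0 : ℕ) + 1 : ℕ∞) ≤ r k0 ∧ r k0 ≤ ((n - 1 : ℕ) : ℕ∞)) ∨ r k0 = ⊤ := by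
        rcases hrB.1 k0 with h | h
        · exact Or.inr (Or.inr h)
        · by_cases hc : r k0 ≤ ((k0 : ℕ) : ℕ∞)
          · exact Or.inl ⟨ht1, hc⟩
          · refine Or.inr (Or.inl ⟨?_, h⟩)
            have hlt : ((k0 : ℕ) : ℕ∞) < r k0 := not_le.mp hc
            have hne : r k0 ≠ ⊤ := by
              intro hh; rw [hh] at h; exact absurd h (by simp)
            obtain ⟨m, hm⟩ : ∃ m : ℕ, r k0 = (m : ℕ∞) :=
              ⟨(r k0).toNat, (ENat.coe_toNat hne).symm⟩
            rw [hm] at hlt ⊢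
            have : (k0:ℕ) < m := by exact_mod_cast hlt
            exact_mod_cast (by omega : (k0:ℕ) + 1 ≤ m)
      refine ⟨k0, r k0, hrange, ?_⟩
      by_contra hne'
      have haB : isBVec n (Wvec n k0 (r k0)) := wvec_isBVec n k0 (r k0) (key k0 (r k0) hrange).2
      have haR : Wvec n k0 (r k0) < r :=
        lt_of_le_of_ne (wvec_le n r hrB k0) (fun hh => hne' hh.symm)
      have hbB : isBVec n (Function.update r k0 0) := update_isBVec n r hrB k0 hmin
      have hbR : Function.update r k0 0 < r := by
        refine lt_of_le_of_ne ?_ ?_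
        · intro j
          by_cases hj : j = k0
          · subst hj; rw [Function.update_self]; exact zero_le
          · rw [Function.update_of_ne hj]
        · intro hh
          have := congrFun hh k0
          rw [Function.update_self] at this
          exact hk0S this.symm
      obtain ⟨h, hhB, hah, hbh, hrh⟩ :=
        hmain _ _ haB hbB haR hbR
      apply hrh
      intro j
      by_cases hj : j = k0
      · subst hj
        have := hah k0
        rwa [wvec_self] at this
      · have := hbh j
        rwa [Function.update_of_ne hj] at this
    · rintro ⟨k, t, hrange, rfl⟩
      obtain ⟨ht1, ht2⟩ := key k t hrange
      exact wvec_joinIrred n k t ht1 ht2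
  · intro r hr h hh hall
    intro j
    by_cases hj : r j = 0
    · rw [hj]; exact zero_le
    · have ht1 : 1 ≤ r j := ENat.one_le_iff_ne_zero.mpr hj
      have ht2 : r j = ⊤ ∨ r j ≤ ((n-1:ℕ):ℕ∞) := hr.1 j
      have hW := hall (Wvec n j (r j)) (wvec_joinIrred n j (r j) ht1 ht2)
        (wvec_le n r hr j)
      have := hW j
      rwa [wvec_self] at this
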